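/- Fix two voters N = {1, 2}, a path-connected domain D and a strategy-proof rule f : D^2 → A, and let (x_1, …, x_v) be a path in the adjacency graph G_∼. Then: (i) if f(P_1, P_2) = x_1 for all P_1 ∈ D^{x_1} and P_2 ∈ D^{x_2}, then f(P_1, P_2) = x_k for all 1 ≤ k ≤ k' ≤ v, P_1 ∈ D^{x_k} and P_2 ∈ D^{x_{k'}}; (ii) if f(P_1, P_2) = x_1 for all P_1 ∈ D^{x_2} and P_2 ∈ D^{x_1}, then f(P_1, P_2) = x_k for all 1 ≤ k ≤ k' ≤ v, P_1 ∈ D^{x_{k'}} and P_2 ∈ D^{x_k}; (iii) if f(P_1, P_2) = x_v for all P_1 ∈ D^{x_v} and P_2 ∈ D^{x_{v-1}}, then f(P_1, P_2) = x_k for all 1 ≤ k' ≤ k ≤ v, P_1 ∈ D^{x_k} and P_2 ∈ D^{x_{k'}}; (iv) if f(P_1, P_2) = x_v for all P_1 ∈ D^{x_{v-1}} and P_2 ∈ D^{x_v}, then f(P_1, P_2) = x_k for all 1 ≤ k' ≤ k ≤ v, P_1 ∈ D^{x_{k'}} and P_2 ∈ D^{x_k}. -/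

import Mathlib

open Classical

set_option linter.unusedSectionVars false
set_option linter.unusedVariables false

/-- A strict preference over `A`, represented as a ranking bijection:
`P k` is the `(k+1)`-th ranked alternative. -/
abbrev Pref (A : Type*) [Fintype A] := Fin (Fintype.card A) ≃ A

variable {A : Type*} [Fintype A] [DecidableEq A] [Nonempty A]

/-- `rk P k` : the `(k+1)`-th ranked alternative of `P` (0-indexed, so `rk P 0 = r₁(P)`). -/
noncomputable def rk (P : Pref A) (k : ℕ) : A :=
  if h : k < Fintype.card A then P ⟨k, h⟩ else Classical.arbitrary A

/-- The peak `r₁(P)`. -/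
noncomputable def peak (P : Pref A) : A := rk P 0

/-- The second-ranked alternative `r₂(P)`. -/
noncomputable def second (P : Pref A) : A := rk P 1

/-- `a` is strictly preferred to `b` under `P`. -/
def prefers (P : Pref A) (a b : A) : Prop := P.symm a < P.symm b

/-- Two preferences are completely reversed. -/
def Reversed (P P' : Pref A) : Prop := ∀ a b : A, prefers P a b ↔ prefers P' b a

/-- A profile lies in the domain `D`. -/
def InDom (D : Set (Pref A)) {n : ℕ} (P : Fin n → Pref A) : Prop := ∀ i, P i ∈ D

/-- Unanimity (an SCF satisfying it is called a rule). -/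
def IsRule (D : Set (Pref A)) {n : ℕ} (f : (Fin n → Pref A) → A) : Prop :=
  ∀ P : Fin n → Pref A, InDom D P → ∀ a : A, (∀ i, peak (P i) = a) → f P = a

/-- Strategy-proofness (relative to the domain `D`). -/
def StrategyProof (D : Set (Pref A)) {n : ℕ} (f : (Fin n → Pref A) → A) : Prop :=
  ∀ P : Fin n → Pref A, InDom D P → ∀ i : Fin n, ∀ Q ∈ D,
    f P = f (Function.update P i Q) ∨ prefers (P i) (f P) (f (Function.update P i Q))

/-- The tops-only property. -/
def TopsOnly (D : Set (Pref A)) {n : ℕ} (f : (Fin n → Pref A) → A) : Prop :=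
  ∀ P P' : Fin n → Pref A, InDom D P → InDom D P' →
    (∀ i, peak (P i) = peak (P' i)) → f P = f P'

/-- Anonymity. -/
def Anonymous (D : Set (Pref A)) {n : ℕ} (f : (Fin n → Pref A) → A) : Prop :=
  ∀ P : Fin n → Pref A, InDom D P → ∀ σ : Equiv.Perm (Fin n), f (P ∘ σ) = f P

/-- `f` behaves like a dictatorship on `B`. -/
def DictatorOn (D : Set (Pref A)) {n : ℕ} (f : (Fin n → Pref A) → A) (B : Set A) : Prop :=
  ∃ i : Fin n, ∀ P : Fin n → Pref A, InDom D P → (∀ j, peak (P j) ∈ B) → f P = peak (P i)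

/-- `f` is a dictatorship. -/
def Dictatorship (D : Set (Pref A)) {n : ℕ} (f : (Fin n → Pref A) → A) : Prop :=
  DictatorOn D f Set.univ

/-- A dictatorial domain. -/
def DictatorialDomain (D : Set (Pref A)) : Prop :=
  ∀ n : ℕ, 2 ≤ n → ∀ f : (Fin n → Pref A) → A,
    IsRule D f → StrategyProof D f → Dictatorship D f

/-- A tops-only domain. -/
def TopsOnlyDomain (D : Set (Pref A)) : Prop :=
  ∀ n : ℕ, 2 ≤ n → ∀ f : (Fin n → Pref A) → A,
    IsRule D f → StrategyProof D f → TopsOnly D f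

/-- Adjacency of two alternatives relative to the domain `D`. -/
def DomAdjacent (D : Set (Pref A)) (a b : A) : Prop :=
  ∃ P ∈ D, ∃ P' ∈ D, peak P = a ∧ second P = b ∧ peak P' = b ∧ second P' = a ∧
    ∀ k : ℕ, 2 ≤ k → rk P k = rk P' k

/-- The adjacency graph `G_∼` of the domain `D`. -/
noncomputable def adjGraph (D : Set (Pref A)) : SimpleGraph A :=
  SimpleGraph.fromRel (DomAdjacent D)

/-- Path-connectedness of the domain. -/
def PathConnectedDom (D : Set (Pref A)) : Prop := (adjGraph D).Connected

/-- Diversity: the domain contains two completely reversed preferences. -/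
def Diversity (D : Set (Pref A)) : Prop := ∃ P ∈ D, ∃ P' ∈ D, Reversed P P'

/-- `S(D^a)`: the set of alternatives second-ranked in some preference of `D` with peak `a`. -/
def secondsSet (D : Set (Pref A)) (a : A) : Set A := {b | ∃ P ∈ D, peak P = a ∧ second P = b}

/-- Leaf symmetry. -/
def LeafSymmetry (D : Set (Pref A)) : Prop :=
  ∀ x : A, (∃! y, (adjGraph D).Adj x y) →
    (∃ u ∈ secondsSet D x, ∃ v ∈ secondsSet D x, u ≠ v) →
    ∃ z ∈ secondsSet D x, ¬ (adjGraph D).Adj x z ∧ x ∈ secondsSet D z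

/-- Unidimensionality: path-connectedness, diversity and leaf symmetry. -/
def Unidimensional (D : Set (Pref A)) : Prop :=
  PathConnectedDom D ∧ Diversity D ∧ LeafSymmetry D

/-- The unique seconds property. -/
def UniqueSeconds (D : Set (Pref A)) : Prop := ∃ x b : A, secondsSet D x = {b}

/-- Minimal richness. -/
def MinimallyRich (D : Set (Pref A)) : Prop := ∀ a : A, ∃ P ∈ D, peak P = a

/-- The vertex set `⟨x, y|T⟩` of the (in a tree, unique) shortest path between `x` and `y`. -/
def intv (T : SimpleGraph A) (x y : A) : Set A :=
  {z | T.dist x z + T.dist z y = T.dist x y}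

/-- `a'` is the projection of `a` onto `B` in `T`. -/
def IsProjPt (T : SimpleGraph A) (B : Set A) (a a' : A) : Prop :=
  a' ∈ B ∧ ∀ b ∈ B, a' ∈ intv T a b

/-- The projection `Proj(a, B)` of `a` onto a path-closed set `B` in the tree `T`. -/
noncomputable def projOn (T : SimpleGraph A) (B : Set A) (a : A) : A :=
  if h : ∃ a', IsProjPt T B a a' then h.choose else a

/-- `Γ(P)`: the vertex set of the minimal subtree of `T` spanning all the peaks. -/
def gammaSet (T : SimpleGraph A) {n : ℕ} (P : Fin n → Pref A) : Set A :=
  {c | ∃ i j : Fin n, c ∈ intv T (peak (P i)) (peak (P j))}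

/-- The projection rule on `T` w.r.t. `xbar`. -/
noncomputable def projRule (T : SimpleGraph A) (xbar : A) {n : ℕ}
    (P : Fin n → Pref A) : A :=
  projOn T (gammaSet T P) xbar

/-- Single-peakedness on a tree. -/
def SinglePeaked (T : SimpleGraph A) (P : Pref A) : Prop :=
  ∀ c d : A, c ≠ d → c ∈ intv T (peak P) d → prefers P c d

/-- Semi-single-peakedness on `T` w.r.t. the threshold `xbar`. -/
def SemiSP (T : SimpleGraph A) (xbar : A) (P : Pref A) : Prop :=
  (∀ c d : A, c ∈ intv T (peak P) xbar → d ∈ intv T (peak P) xbar → c ≠ d →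
    c ∈ intv T (peak P) d → prefers P c d) ∧
  (∀ c : A, c ∉ intv T (peak P) xbar →
    prefers P (projOn T (intv T (peak P) xbar) c) c)

/-- A semi-single-peaked domain. -/
def SemiSPDomain (D : Set (Pref A)) : Prop :=
  ∃ (T : SimpleGraph A) (xbar : A), T.IsTree ∧
    D ⊆ {P | SemiSP T xbar P} ∧ (adjGraph D).Connected

/-- `A^{a⇀b}`: the alternatives whose path to `b` goes through `a`. -/
def sideSet (T : SimpleGraph A) (a b : A) : Set A := {z | a ∈ intv T z b}

/-- `x = max^P(B)`: `x` is `P`'s best alternative of `B`. -/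
def IsBestOf (P : Pref A) (x : A) (B : Set A) : Prop :=
  x ∈ B ∧ ∀ y ∈ B, y ≠ x → prefers P x y

/-- `a` and `b` are dual-thresholds in the tree `T`. -/
def DualThresholds (T : SimpleGraph A) (a b : A) : Prop :=
  a ≠ b ∧ ∀ c : A, c ∉ intv T a b →
    projOn T (intv T a b) c = a ∨ projOn T (intv T a b) c = b

/-- An `(a,b)`-semi-hybrid preference on `T`. -/
def SemiHybridPref (T : SimpleGraph A) (a b : A) (P : Pref A) : Prop :=
  (peak P ∈ sideSet T a b \ {a} → SemiSP T a P ∧ IsBestOf P b (sideSet T b a)) ∧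
  (peak P ∈ sideSet T b a \ {b} → SemiSP T b P ∧ IsBestOf P a (sideSet T a b)) ∧
  (peak P ∈ intv T a b → IsBestOf P a (sideSet T a b) ∧ IsBestOf P b (sideSet T b a))

/-- `x` is a leaf of the subgraph of `G` induced on `B`. -/
def IsLeafOn (G : SimpleGraph A) (B : Set A) (x : A) : Prop :=
  x ∈ B ∧ ∃! y, y ∈ B ∧ G.Adj x y

/-- `D` is an `(a,b)`-semi-hybrid domain on the tree `T`. -/
def SemiHybridDomainOn (D : Set (Pref A)) (T : SimpleGraph A) (a b : A) : Prop :=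
  T.IsTree ∧ DualThresholds T a b ∧ D ⊆ {P | SemiHybridPref T a b P} ∧
  (adjGraph D).Connected ∧
  (¬ ∃ (T' : SimpleGraph A) (a' b' : A), T'.IsTree ∧ DualThresholds T' a' b' ∧
      D ⊆ {P | SemiHybridPref T' a' b' P} ∧ intv T' a' b' ⊂ intv T a b) ∧
  ((adjGraph D).IsTree →
    ∀ x : A, IsLeafOn (adjGraph D) (intv T a b) x →
      ∃ P ∈ D, ¬ SemiSP (adjGraph D) x P)

/-- `D` is a semi-hybrid domain. -/
def SemiHybridDomain (D : Set (Pref A)) : Prop :=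
  ∃ (T : SimpleGraph A) (a b : A), SemiHybridDomainOn D T a b

/-- An `(a,b)`-hybrid preference on `T`. -/
def HybridPref (T : SimpleGraph A) (a b : A) (P : Pref A) : Prop :=
  (∀ y z : A, ((y ∈ sideSet T a b ∧ z ∈ sideSet T a b) ∨
      (y ∈ sideSet T b a ∧ z ∈ sideSet T b a)) → y ≠ z →
    y ∈ intv T (peak P) z → prefers P y z) ∧
  (peak P ∈ sideSet T a b \ {a} → IsBestOf P a (intv T a b)) ∧
  (peak P ∈ sideSet T b a \ {b} → IsBestOf P b (intv T a b))

/-- `D` is an `(a,b)`-hybrid domain on the tree `T`. -/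
def HybridDomainOn (D : Set (Pref A)) (T : SimpleGraph A) (a b : A) : Prop :=
  T.IsTree ∧ DualThresholds T a b ∧ D ⊆ {P | HybridPref T a b P} ∧
  (adjGraph D).Connected ∧
  (¬ ∃ (T' : SimpleGraph A) (a' b' : A), T'.IsTree ∧ DualThresholds T' a' b' ∧
      D ⊆ {P | HybridPref T' a' b' P} ∧ intv T' a' b' ⊂ intv T a b) ∧
  3 ≤ (intv T a b).ncard

/-- `f` is an `(a,b)`-hybrid rule on the tree `T`. -/
def IsHybridRule (D : Set (Pref A)) {n : ℕ} (f : (Fin n → Pref A) → A)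
    (T : SimpleGraph A) (a b : A) : Prop :=
  T.IsTree ∧ DualThresholds T a b ∧ 3 ≤ (intv T a b).ncard ∧
  ∃ i : Fin n, ∀ P : Fin n → Pref A, InDom D P →
    (peak (P i) ∈ intv T a b → f P = peak (P i)) ∧
    (peak (P i) ∈ sideSet T a b \ {a} → f P = projOn T (gammaSet T P) a) ∧
    (peak (P i) ∈ sideSet T b a \ {b} → f P = projOn T (gammaSet T P) b)

/-- The PNT rule on `T` w.r.t. the edge `(x, y)`, with the two distinguished voters `i, j`. -/
noncomputable def pntRule (T : SimpleGraph A) (x y : A) {n : ℕ} (i j : Fin n)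
    (P : Fin n → Pref A) : A :=
  if peak (P i) ∈ sideSet T y x then peak (P i)
  else if peak (P j) ∈ sideSet T x y then projOn T (gammaSet T P) x
  else if prefers (P j) x y then x else y

/-- `(x, y)` is a critical spot in `T` for the domain `D`. -/
def CriticalSpot (D : Set (Pref A)) (T : SimpleGraph A) (x y : A) : Prop :=
  T.Adj x y ∧
  (∀ P ∈ D, peak P ∈ sideSet T x y → SemiSP T y P) ∧
  (∀ P ∈ D, peak P ∈ sideSet T y x → IsBestOf P x (sideSet T x y)) ∧
  (∃ P ∈ D, ∃ P' ∈ D, peak P = peak P' ∧ peak P ∈ sideSet T y x ∧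
    prefers P y x ∧ prefers P' x y)

/-- `x` is a path in the graph `G` (pairwise distinct, consecutive vertices adjacent). -/
def IsPathIn (G : SimpleGraph A) {v : ℕ} (x : Fin v → A) : Prop :=
  Function.Injective x ∧
  ∀ (k : ℕ) (h : k + 1 < v), G.Adj (x ⟨k, Nat.lt_of_succ_lt h⟩) (x ⟨k + 1, h⟩)

/-- `x` is a cycle in the graph `G`. -/
def IsCycleIn (G : SimpleGraph A) {v : ℕ} (x : Fin v → A) : Prop :=
  Function.Injective x ∧
  (∀ (k : ℕ) (h : k + 1 < v), G.Adj (x ⟨k, Nat.lt_of_succ_lt h⟩) (x ⟨k + 1, h⟩)) ∧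
  ∀ (h : 0 < v), G.Adj (x ⟨v - 1, Nat.sub_lt h Nat.one_pos⟩) (x ⟨0, h⟩)

/-- The line `L^A` induced by the ranking of the preference `P`. -/
noncomputable def lineOf (P : Pref A) : SimpleGraph A :=
  SimpleGraph.fromRel (fun a b =>
    ∃ k : ℕ, k + 1 < Fintype.card A ∧ rk P k = a ∧ rk P (k + 1) = b)

/-- The median of three natural numbers. -/
def med3 (a b c : ℕ) : ℕ := max (min a b) (min (max a b) c)

/-- The two-voter profile in which voter `i` reports `Pi` and the other voter reports `Q`. -/
noncomputable def prof2 (i : Fin 2) (Pi Q : Pref A) : Fin 2 → Pref A :=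
  Function.update (fun _ => Q) i Pi

/-! ### Auxiliary lemmas for Statement 13 -/

lemma rk_eq (P : Pref A) {k : ℕ} (h : k < Fintype.card A) : rk P k = P ⟨k, h⟩ :=
  dif_pos h

lemma symm_rk (P : Pref A) {k : ℕ} (h : k < Fintype.card A) :
    P.symm (rk P k) = ⟨k, h⟩ := by
  rw [rk_eq P h]; exact P.symm_apply_apply _

lemma symm_peak (P : Pref A) (h : 0 < Fintype.card A) : P.symm (peak P) = ⟨0, h⟩ :=
  symm_rk P h

lemma symm_second (P : Pref A) (h : 1 < Fintype.card A) : P.symm (second P) = ⟨1, h⟩ :=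
  symm_rk P h

lemma not_prefers_peak (P : Pref A) (z : A) : ¬ prefers P z (peak P) := by
  have h0 : 0 < Fintype.card A := Fintype.card_pos
  intro h
  simp only [prefers] at h
  rw [symm_peak P h0, Fin.lt_def] at h
  simp at h

lemma prefers_irrefl (P : Pref A) (z : A) : ¬ prefers P z z := by
  simp [prefers]

lemma prefers_second_eq (hc : 2 ≤ Fintype.card A) (P : Pref A) {z : A}
    (h : prefers P z (second P)) : z = peak P := by
  have h0 : 0 < Fintype.card A := by omega
  have h1 : 1 < Fintype.card A := by omega
  simp only [prefers] at h
  rw [symm_second P h1, Fin.lt_def] at h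
  have hz : P.symm z = ⟨0, h0⟩ := Fin.ext (by simpa using Nat.lt_one_iff.mp h)
  have hz' : z = P ⟨0, h0⟩ := by rw [← hz, Equiv.apply_symm_apply]
  rw [hz']; exact (rk_eq P h0).symm

/-- The swap lemma: if `Q, Q'` agree except that the top two alternatives `a, b`
are swapped, and preferences between `c` and `d` are reversed between `Q` and `Q'`,
then `c = a` and `d = b`. -/
lemma swap_core (hc : 2 ≤ Fintype.card A) {a b : A} {Q Q' : Pref A}
    (hpQ : peak Q = a) (hsQ : second Q = b) (hpQ' : peak Q' = b) (hsQ' : second Q' = a)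
    (ht : ∀ m, 2 ≤ m → rk Q m = rk Q' m) {c d : A}
    (h1 : prefers Q c d) (h2 : prefers Q' d c) : c = a ∧ d = b := by
  have h0 : 0 < Fintype.card A := by omega
  have h1' : 1 < Fintype.card A := by omega
  have qa : Q.symm a = ⟨0, h0⟩ := by rw [← hpQ]; exact symm_peak Q h0
  have qb : Q.symm b = ⟨1, h1'⟩ := by rw [← hsQ]; exact symm_second Q h1'
  have q'b : Q'.symm b = ⟨0, h0⟩ := by rw [← hpQ']; exact symm_peak Q' h0
  have q'a : Q'.symm a = ⟨1, h1'⟩ := by rw [← hsQ']; exact symm_second Q' h1'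
  have tail : ∀ z : A, 2 ≤ (Q.symm z).val → Q'.symm z = Q.symm z := by
    intro z hz
    have hlt : (Q.symm z).val < Fintype.card A := (Q.symm z).isLt
    have e1 : rk Q (Q.symm z).val = z := by
      rw [rk_eq Q hlt]; exact Q.apply_symm_apply z
    have e2 : rk Q' (Q.symm z).val = z := by rw [← ht _ hz]; exact e1
    rw [rk_eq Q' hlt] at e2
    have e3 : Q'.symm z = ⟨(Q.symm z).val, hlt⟩ := Q'.symm_apply_eq.mpr e2.symm
    rw [e3]
  have vza : ∀ z : A, (Q.symm z).val = 0 → z = a := by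
    intro z hz
    refine Q.symm.injective (Fin.ext ?_)
    rw [qa]; exact hz
  have vzb : ∀ z : A, (Q.symm z).val = 1 → z = b := by
    intro z hz
    refine Q.symm.injective (Fin.ext ?_)
    rw [qb]; exact hz
  simp only [prefers] at h1 h2
  by_cases hca : c = a
  · refine ⟨hca, ?_⟩
    rw [hca, q'a, Fin.lt_def] at h2
    have hd0 : Q'.symm d = ⟨0, h0⟩ := Fin.ext (by simpa using Nat.lt_one_iff.mp h2)
    exact Q'.symm.injective (hd0.trans q'b.symm)
  · exfalso
    by_cases hcb : c = b
    · rw [hcb, q'b, Fin.lt_def] at h2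
      simp at h2
    · have hc2 : 2 ≤ (Q.symm c).val := by
        have t1 := mt (vza c) hca
        have t2 := mt (vzb c) hcb
        omega
      have hcc : Q'.symm c = Q.symm c := tail c hc2
      by_cases hda : d = a
      · rw [hda, qa, Fin.lt_def] at h1
        simp at h1
      · by_cases hdb : d = b
        · rw [hdb, qb] at h1
          change (Q.symm c).val < 1 at h1
          omega
        · have hd2 : 2 ≤ (Q.symm d).val := by
            have t1 := mt (vza d) hda
            have t2 := mt (vzb d) hdb
            omega
          rw [tail d hd2, hcc, Fin.lt_def] at h2
          rw [Fin.lt_def] at h1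
          omega

lemma indom_pair {D : Set (Pref A)} {P1 P2 : Pref A} (h1 : P1 ∈ D) (h2 : P2 ∈ D) :
    InDom D ![P1, P2] := by
  intro i; fin_cases i <;> simpa

lemma update_pair0 (P1 P2 Q : Pref A) : Function.update ![P1, P2] 0 Q = ![Q, P2] := by
  funext i; fin_cases i <;> simp [Function.update]

lemma update_pair1 (P1 P2 Q : Pref A) : Function.update ![P1, P2] 1 Q = ![P1, Q] := by
  funext i; fin_cases i <;> simp [Function.update]

/-- The abstract propagation lemma for a two-argument unanimous strategy-proof rule
along a path in the adjacency graph. -/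
lemma key_propagation (D : Set (Pref A)) (hcard : 3 ≤ Fintype.card A)
    (F : Pref A → Pref A → A)
    (HU : ∀ a : A, ∀ P1 ∈ D, ∀ P2 ∈ D, peak P1 = a → peak P2 = a → F P1 P2 = a)
    (HS1 : ∀ P1 ∈ D, ∀ P2 ∈ D, ∀ Q ∈ D,
      F P1 P2 = F Q P2 ∨ prefers P1 (F P1 P2) (F Q P2))
    (HS2 : ∀ P1 ∈ D, ∀ P2 ∈ D, ∀ Q ∈ D,
      F P1 P2 = F P1 Q ∨ prefers P2 (F P1 P2) (F P1 Q))
    (v : ℕ) (x : ℕ → A)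
    (hinj : ∀ i, i < v → ∀ j, j < v → x i = x j → i = j)
    (hadj : ∀ k, k + 1 < v → ∃ Q ∈ D, ∃ Q' ∈ D, peak Q = x k ∧ second Q = x (k+1) ∧
        peak Q' = x (k+1) ∧ second Q' = x k ∧ ∀ m, 2 ≤ m → rk Q m = rk Q' m)
    (hbase : ∀ P1 ∈ D, ∀ P2 ∈ D, peak P1 = x 0 → peak P2 = x 1 → F P1 P2 = x 0) :
    ∀ c, c < v → ∀ k, k ≤ c → ∀ P1 ∈ D, ∀ P2 ∈ D,
      peak P1 = x k → peak P2 = x c → F P1 P2 = x k := by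
  have hc2 : (2 : ℕ) ≤ Fintype.card A := by omega
  intro c
  induction c using Nat.strong_induction_on with
  | _ c IH =>
  intro hcv
  rcases Nat.lt_or_ge c 2 with hcsm | hcge
  · -- c = 0 or c = 1
    interval_cases c
    · intro k hk P1 hP1 P2 hP2 e1 e2
      have : k = 0 := Nat.le_zero.mp hk
      subst this
      exact HU (x 0) P1 hP1 P2 hP2 e1 e2
    · intro k hk P1 hP1 P2 hP2 e1 e2
      interval_cases k
      · exact hbase P1 hP1 P2 hP2 e1 e2
      · exact HU (x 1) P1 hP1 P2 hP2 e1 e2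
  · -- c ≥ 2
    obtain ⟨Qc, hQc, Qc', hQc', hpc, hsc, hpc', hsc', htc⟩ := hadj (c-1) (by omega)
    have ecc : c - 1 + 1 = c := by omega
    rw [ecc] at hsc hpc'
    -- Claim A : F P1 Qc' = x kk for every P1 with peak x kk, kk ≤ c-1
    have claim_a : ∀ kk, kk ≤ c - 1 → ∀ P1 ∈ D, peak P1 = x kk → F P1 Qc' = x kk := by
      intro kk hkk P1 hP1 hpk
      rcases Nat.lt_or_eq_of_le hkk with hlt | heq
      · have h1 : F P1 Qc = x kk :=
          IH (c-1) (by omega) (by omega) kk (by omega) P1 hP1 Qc hQc hpk hpc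
        rcases HS2 P1 hP1 Qc hQc Qc' hQc' with he | hp1
        · rw [← he]; exact h1
        · rcases HS2 P1 hP1 Qc' hQc' Qc hQc with he | hp2
          · rw [he]; exact h1
          · exfalso
            obtain ⟨hca, _⟩ := swap_core hc2 hpc hsc hpc' hsc' htc hp1 hp2
            have : x kk = x (c-1) := h1.symm.trans hca
            have := hinj kk (by omega) (c-1) (by omega) this
            omega
      · subst heq
        obtain ⟨R, hR, R', hR', hpR, hsR, hpR', hsR', htR⟩ := hadj (c-2) (by omega)
        have e1 : c - 2 + 1 = c - 1 := by omega
        rw [e1] at hsR hpR'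
        have h1 : F R Qc = x (c-2) :=
          IH (c-1) (by omega) (by omega) (c-2) (by omega) R hR Qc hQc hpR hpc
        have h2 : F R Qc' = x (c-2) := by
          rcases HS2 R hR Qc hQc Qc' hQc' with he | hp1
          · rw [← he]; exact h1
          · rcases HS2 R hR Qc' hQc' Qc hQc with he | hp2
            · rw [he]; exact h1
            · exfalso
              obtain ⟨hca, _⟩ := swap_core hc2 hpc hsc hpc' hsc' htc hp1 hp2
              have := hinj (c-2) (by omega) (c-1) (by omega) (h1.symm.trans hca)
              omega
        have h3 : F R' Qc' = x (c-1) := by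
          have hcase : F R' Qc' = x (c-2) ∨ F R' Qc' = x (c-1) := by
            rcases HS1 R hR Qc' hQc' R' hR' with he | hp1
            · left; rw [← he]; exact h2
            · rcases HS1 R' hR' Qc' hQc' R hR with he | hp2
              · left; rw [he]; exact h2
              · obtain ⟨_, hdb⟩ := swap_core hc2 hpR hsR hpR' hsR' htR hp1 hp2
                right; exact hdb
          rcases hcase with hbad | hok
          · exfalso
            have hu : F R' Qc = x (c-1) := HU (x (c-1)) R' hR' Qc hQc hpR' hpc
            rcases HS2 R' hR' Qc' hQc' Qc hQc with he | hp
            · have : x (c-2) = x (c-1) := hbad.symm.trans (he.trans hu)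
              have := hinj (c-2) (by omega) (c-1) (by omega) this
              omega
            · rw [hbad, hu, ← hsc'] at hp
              have := prefers_second_eq hc2 Qc' hp
              rw [hpc'] at this
              have := hinj (c-2) (by omega) c (by omega) this
              omega
          · exact hok
        rcases HS1 P1 hP1 Qc' hQc' R' hR' with he | hp
        · rw [he]; exact h3
        · exfalso
          rw [h3, ← hpk] at hp
          exact not_prefers_peak P1 _ hp
    -- Claim B : downward induction on the peak of voter 1
    have claim_b : ∀ d k, k + d = c → ∀ P1 ∈ D, ∀ P2 ∈ D,
        peak P1 = x k → peak P2 = x c → F P1 P2 = x k := by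
      intro d
      induction d with
      | zero =>
        intro k hkc P1 hP1 P2 hP2 e1 e2
        have : k = c := by omega
        subst this
        exact HU _ P1 hP1 P2 hP2 e1 e2
      | succ d IHd =>
        intro k hkc P1 hP1 P2 hP2 hpk1 hpk2
        obtain ⟨Qk, hQk, Qk', hQk', hpk, hsk, hpk', hsk', htk⟩ := hadj k (by omega)
        have h1 : F Qk' P2 = x (k+1) := IHd (k+1) (by omega) Qk' hQk' P2 hP2 hpk' hpk2
        have h2 : F Qk P2 = x (k+1) ∨ F Qk P2 = x k := by
          rcases HS1 Qk hQk P2 hP2 Qk' hQk' with he | hp1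
          · left; rw [he]; exact h1
          · rcases HS1 Qk' hQk' P2 hP2 Qk hQk with he | hp2
            · left; rw [← he]; exact h1
            · obtain ⟨hca, _⟩ := swap_core hc2 hpk hsk hpk' hsk' htk hp1 hp2
              right; exact hca
        have h3 : F Qk P2 = x k := by
          rcases h2 with hbad | hok
          · exfalso
            have hall : ∀ S ∈ D, peak S = x (k+1) → F Qk S = x (k+1) := by
              intro S hS hpS
              rcases HS2 Qk hQk S hS P2 hP2 with he | hp
              · rw [he]; exact hbad
              · exfalso
                rw [hbad, ← hpS] at hp
                exact not_prefers_peak S _ hp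
            by_cases hkk : k + 1 ≤ c - 1
            · have ha := hall Qk' hQk' hpk'
              have hIH : F Qk Qk' = x k :=
                IH (k+1) (by omega) (by omega) k (by omega) Qk hQk Qk' hQk' hpk hpk'
              have := hinj (k+1) (by omega) k (by omega) (ha.symm.trans hIH)
              omega
            · have hk1c : k = c - 1 := by omega
              have ha := hall Qc' hQc' (by rw [hpc']; congr 1; omega)
              have hca2 : F Qk Qc' = x (c-1) :=
                claim_a (c-1) le_rfl Qk hQk (by rw [hpk, hk1c])
              have : x (k+1) = x (c-1) := ha.symm.trans hca2
              have := hinj (k+1) (by omega) (c-1) (by omega) this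
              omega
          · exact hok
        rcases HS1 P1 hP1 P2 hP2 Qk hQk with he | hp
        · rw [he]; exact h3
        · exfalso
          rw [h3, ← hpk1] at hp
          exact not_prefers_peak P1 _ hp
    intro k hk P1 hP1 P2 hP2 e1 e2
    exact claim_b (c - k) k (by omega) P1 hP1 P2 hP2 e1 e2

/-- Lemma 1: propagation of the identity of the winner along a
path of the adjacency graph for a two-voter strategy-proof rule. -/
theorem stmt13_step1 (D : Set (Pref A)) (hD : D.Nonempty)
    (hcard : 3 ≤ Fintype.card A) (hpc : PathConnectedDom D)
    (f : (Fin 2 → Pref A) → A) (hrule : IsRule D f) (hsp : StrategyProof D f)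
    (v : ℕ) (hv : 2 ≤ v) (x : Fin v → A) (hpath : IsPathIn (adjGraph D) x) :
    ((∀ P1 ∈ D, ∀ P2 ∈ D, peak P1 = x ⟨0, by omega⟩ → peak P2 = x ⟨1, by omega⟩ →
        f ![P1, P2] = x ⟨0, by omega⟩) →
      ∀ k k' : Fin v, k ≤ k' → ∀ P1 ∈ D, ∀ P2 ∈ D,
        peak P1 = x k → peak P2 = x k' → f ![P1, P2] = x k) ∧
    ((∀ P1 ∈ D, ∀ P2 ∈ D, peak P1 = x ⟨1, by omega⟩ → peak P2 = x ⟨0, by omega⟩ →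
        f ![P1, P2] = x ⟨0, by omega⟩) →
      ∀ k k' : Fin v, k ≤ k' → ∀ P1 ∈ D, ∀ P2 ∈ D,
        peak P1 = x k' → peak P2 = x k → f ![P1, P2] = x k) ∧
    ((∀ P1 ∈ D, ∀ P2 ∈ D, peak P1 = x ⟨v - 1, by omega⟩ → peak P2 = x ⟨v - 2, by omega⟩ →
        f ![P1, P2] = x ⟨v - 1, by omega⟩) →
      ∀ k k' : Fin v, k' ≤ k → ∀ P1 ∈ D, ∀ P2 ∈ D,
        peak P1 = x k → peak P2 = x k' → f ![P1, P2] = x k) ∧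
    ((∀ P1 ∈ D, ∀ P2 ∈ D, peak P1 = x ⟨v - 2, by omega⟩ → peak P2 = x ⟨v - 1, by omega⟩ →
        f ![P1, P2] = x ⟨v - 1, by omega⟩) →
      ∀ k k' : Fin v, k' ≤ k → ∀ P1 ∈ D, ∀ P2 ∈ D,
        peak P1 = x k' → peak P2 = x k → f ![P1, P2] = x k) := by
  obtain ⟨hxinj, hxadj⟩ := hpath
  have hv0 : 0 < v := by omega
  have HU1 : ∀ a : A, ∀ P1 ∈ D, ∀ P2 ∈ D, peak P1 = a → peak P2 = a →
      f ![P1, P2] = a := by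
    intro a P1 h1 P2 h2 e1 e2
    refine hrule ![P1, P2] (indom_pair h1 h2) a ?_
    intro i; fin_cases i
    · simpa using e1
    · simpa using e2
  have HS1f : ∀ P1 ∈ D, ∀ P2 ∈ D, ∀ Q ∈ D,
      f ![P1, P2] = f ![Q, P2] ∨ prefers P1 (f ![P1, P2]) (f ![Q, P2]) := by
    intro P1 h1 P2 h2 Q hQ
    have := hsp ![P1, P2] (indom_pair h1 h2) 0 Q hQ
    rw [update_pair0] at this
    simpa using this
  have HS2f : ∀ P1 ∈ D, ∀ P2 ∈ D, ∀ Q ∈ D,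
      f ![P1, P2] = f ![P1, Q] ∨ prefers P2 (f ![P1, P2]) (f ![P1, Q]) := by
    intro P1 h1 P2 h2 Q hQ
    have := hsp ![P1, P2] (indom_pair h1 h2) 1 Q hQ
    rw [update_pair1] at this
    simpa using this
  set xh : ℕ → A := fun n => x ⟨n % v, Nat.mod_lt n hv0⟩ with hxhdef
  have hx : ∀ n (h : n < v), xh n = x ⟨n, h⟩ := by
    intro n h
    simp only [hxhdef]
    exact congrArg x (Fin.ext (Nat.mod_eq_of_lt h))
  have hinj' : ∀ i, i < v → ∀ j, j < v → xh i = xh j → i = j := by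
    intro i hi j hj e
    rw [hx i hi, hx j hj] at e
    have := hxinj e
    simpa using congrArg Fin.val this
  have hadj' : ∀ k, k + 1 < v → ∃ Q ∈ D, ∃ Q' ∈ D, peak Q = xh k ∧
      second Q = xh (k+1) ∧ peak Q' = xh (k+1) ∧ second Q' = xh k ∧
      ∀ m, 2 ≤ m → rk Q m = rk Q' m := by
    intro k hk
    have hA := hxadj k hk
    simp only [adjGraph, SimpleGraph.fromRel_adj] at hA
    obtain ⟨hne, hcase⟩ := hA
    rcases hcase with h | h
    · obtain ⟨Q, hQ, Q', hQ', e1, e2, e3, e4, e5⟩ := h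
      refine ⟨Q, hQ, Q', hQ', ?_, ?_, ?_, ?_, e5⟩
      · rw [hx k (by omega)]; exact e1
      · rw [hx (k+1) hk]; exact e2
      · rw [hx (k+1) hk]; exact e3
      · rw [hx k (by omega)]; exact e4
    · obtain ⟨Q, hQ, Q', hQ', e1, e2, e3, e4, e5⟩ := h
      refine ⟨Q', hQ', Q, hQ, ?_, ?_, ?_, ?_, fun m hm => (e5 m hm).symm⟩
      · rw [hx k (by omega)]; exact e3
      · rw [hx (k+1) hk]; exact e4
      · rw [hx (k+1) hk]; exact e1
      · rw [hx k (by omega)]; exact e2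
  have hinjR : ∀ i, i < v → ∀ j, j < v →
      (fun n => xh (v-1-n)) i = (fun n => xh (v-1-n)) j → i = j := by
    intro i hi j hj e
    have := hinj' (v-1-i) (by omega) (v-1-j) (by omega) e
    omega
  have hadjR : ∀ k, k + 1 < v → ∃ Q ∈ D, ∃ Q' ∈ D,
      peak Q = (fun n => xh (v-1-n)) k ∧ second Q = (fun n => xh (v-1-n)) (k+1) ∧
      peak Q' = (fun n => xh (v-1-n)) (k+1) ∧ second Q' = (fun n => xh (v-1-n)) k ∧
      ∀ m, 2 ≤ m → rk Q m = rk Q' m := by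
    intro k hk
    obtain ⟨Q, hQ, Q', hQ', e1, e2, e3, e4, e5⟩ := hadj' (v-2-k) (by omega)
    have ea : v-2-k+1 = v-1-k := by omega
    have eb : v-2-k = v-1-(k+1) := by omega
    rw [ea] at e2 e3
    rw [eb] at e1 e4
    exact ⟨Q', hQ', Q, hQ, e3, e4, e1, e2, fun m hm => (e5 m hm).symm⟩
  refine ⟨?_, ?_, ?_, ?_⟩
  · -- part (i)
    intro hb k k' hkk P1 hP1 P2 hP2 e1 e2
    have hkn : (k : ℕ) ≤ (k' : ℕ) := hkk
    have hbase : ∀ Q1 ∈ D, ∀ Q2 ∈ D, peak Q1 = xh 0 → peak Q2 = xh 1 →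
        f ![Q1, Q2] = xh 0 := by
      intro Q1 h1 Q2 h2 g1 g2
      rw [hx 0 (by omega)]
      refine hb Q1 h1 Q2 h2 ?_ ?_
      · rw [← hx 0 (by omega)]; exact g1
      · rw [← hx 1 (by omega)]; exact g2
    have hres := key_propagation D hcard (fun a b => f ![a, b]) HU1 HS1f HS2f v xh
      hinj' hadj' hbase k'.val k'.isLt k.val hkn P1 hP1 P2 hP2
      (by rw [hx _ k.isLt]; exact e1) (by rw [hx _ k'.isLt]; exact e2)
    have hres' : f ![P1, P2] = xh (k : ℕ) := hres
    rw [hx _ k.isLt] at hres'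
    exact hres'
  · -- part (ii)
    intro hb k k' hkk P1 hP1 P2 hP2 e1 e2
    have hkn : (k : ℕ) ≤ (k' : ℕ) := hkk
    have hbase : ∀ Q1 ∈ D, ∀ Q2 ∈ D, peak Q1 = xh 0 → peak Q2 = xh 1 →
        f ![Q2, Q1] = xh 0 := by
      intro Q1 h1 Q2 h2 g1 g2
      rw [hx 0 (by omega)]
      refine hb Q2 h2 Q1 h1 ?_ ?_
      · rw [← hx 1 (by omega)]; exact g2
      · rw [← hx 0 (by omega)]; exact g1
    have hres := key_propagation D hcard (fun a b => f ![b, a])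
      (fun a P1 h1 P2 h2 u1 u2 => HU1 a P2 h2 P1 h1 u2 u1)
      (fun P1 h1 P2 h2 Q hQ => HS2f P2 h2 P1 h1 Q hQ)
      (fun P1 h1 P2 h2 Q hQ => HS1f P2 h2 P1 h1 Q hQ)
      v xh hinj' hadj' hbase k'.val k'.isLt k.val hkn P2 hP2 P1 hP1
      (by rw [hx _ k.isLt]; exact e2) (by rw [hx _ k'.isLt]; exact e1)
    have hres' : f ![P1, P2] = xh (k : ℕ) := hres
    rw [hx _ k.isLt] at hres'
    exact hres'
  · -- part (iii)
    intro hb k k' hkk P1 hP1 P2 hP2 e1 e2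
    have hkn : (k' : ℕ) ≤ (k : ℕ) := hkk
    have hkv : (k : ℕ) < v := k.isLt
    have hkv' : (k' : ℕ) < v := k'.isLt
    have hbase : ∀ Q1 ∈ D, ∀ Q2 ∈ D, peak Q1 = (fun n => xh (v-1-n)) 0 →
        peak Q2 = (fun n => xh (v-1-n)) 1 → f ![Q1, Q2] = (fun n => xh (v-1-n)) 0 := by
      intro Q1 h1 Q2 h2 g1 g2
      have g1' : peak Q1 = xh (v-1-0) := g1
      have g2' : peak Q2 = xh (v-1-1) := g2
      have ev1 : v - 1 - 0 = v - 1 := by omega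
      have ev2 : v - 1 - 1 = v - 2 := by omega
      rw [ev1, hx (v-1) (by omega)] at g1'
      rw [ev2, hx (v-2) (by omega)] at g2'
      show f ![Q1, Q2] = xh (v-1-0)
      rw [ev1, hx (v-1) (by omega)]
      exact hb Q1 h1 Q2 h2 g1' g2'
    have hres := key_propagation D hcard (fun a b => f ![a, b]) HU1 HS1f HS2f v
      (fun n => xh (v-1-n)) hinjR hadjR hbase (v-1-(k' : ℕ)) (by omega)
      (v-1-(k : ℕ)) (by omega) P1 hP1 P2 hP2
      (by show peak P1 = xh (v-1-(v-1-(k : ℕ)))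
          rw [show v-1-(v-1-(k : ℕ)) = (k : ℕ) from by omega, hx _ k.isLt]; exact e1)
      (by show peak P2 = xh (v-1-(v-1-(k' : ℕ)))
          rw [show v-1-(v-1-(k' : ℕ)) = (k' : ℕ) from by omega, hx _ k'.isLt]; exact e2)
    have hres' : f ![P1, P2] = xh (v-1-(v-1-(k : ℕ))) := hres
    rw [show v-1-(v-1-(k : ℕ)) = (k : ℕ) from by omega, hx _ k.isLt] at hres'
    exact hres'
  · -- part (iv)
    intro hb k k' hkk P1 hP1 P2 hP2 e1 e2
    have hkn : (k' : ℕ) ≤ (k : ℕ) := hkk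
    have hkv : (k : ℕ) < v := k.isLt
    have hkv' : (k' : ℕ) < v := k'.isLt
    have hbase : ∀ Q1 ∈ D, ∀ Q2 ∈ D, peak Q1 = (fun n => xh (v-1-n)) 0 →
        peak Q2 = (fun n => xh (v-1-n)) 1 → f ![Q2, Q1] = (fun n => xh (v-1-n)) 0 := by
      intro Q1 h1 Q2 h2 g1 g2
      have g1' : peak Q1 = xh (v-1-0) := g1
      have g2' : peak Q2 = xh (v-1-1) := g2
      have ev1 : v - 1 - 0 = v - 1 := by omega
      have ev2 : v - 1 - 1 = v - 2 := by omega
      rw [ev1, hx (v-1) (by omega)] at g1'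
      rw [ev2, hx (v-2) (by omega)] at g2'
      show f ![Q2, Q1] = xh (v-1-0)
      rw [ev1, hx (v-1) (by omega)]
      exact hb Q2 h2 Q1 h1 g2' g1'
    have hres := key_propagation D hcard (fun a b => f ![b, a])
      (fun a P1 h1 P2 h2 u1 u2 => HU1 a P2 h2 P1 h1 u2 u1)
      (fun P1 h1 P2 h2 Q hQ => HS2f P2 h2 P1 h1 Q hQ)
      (fun P1 h1 P2 h2 Q hQ => HS1f P2 h2 P1 h1 Q hQ)
      v (fun n => xh (v-1-n)) hinjR hadjR hbase (v-1-(k' : ℕ)) (by omega)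
      (v-1-(k : ℕ)) (by omega) P2 hP2 P1 hP1
      (by show peak P2 = xh (v-1-(v-1-(k : ℕ)))
          rw [show v-1-(v-1-(k : ℕ)) = (k : ℕ) from by omega, hx _ k.isLt]; exact e2)
      (by show peak P1 = xh (v-1-(v-1-(k' : ℕ)))
          rw [show v-1-(v-1-(k' : ℕ)) = (k' : ℕ) from by omega, hx _ k'.isLt]; exact e1)
    have hres' : f ![P1, P2] = xh (v-1-(v-1-(k : ℕ))) := hres
    rw [show v-1-(v-1-(k : ℕ)) = (k : ℕ) from by omega, hx _ k.isLt] at hres'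
    exact hres'
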